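/- For 2 ≤ m ≤ n, the relative commutant Z(ℂ[H_{m,n}], ℂ[H_{m-1,n}]) = {a ∈ ℂ[H_{m,n}] : ab = ba for all b ∈ ℂ[H_{m-1,n}]} is a commutative algebra. -/

import Mathlib

set_option maxHeartbeats 1000000
set_option linter.unusedSectionVars false
set_option linter.unusedVariables false
set_option linter.unnecessarySimpa false

/-- The action of `Equiv.Perm (Fin n)` on `Fin n → G` by permuting coordinates. -/
def wreathHom (G : Type*) [Group G] (n : ℕ) : Equiv.Perm (Fin n) →* MulAut (Fin n → G) where
  toFun π := MulEquiv.arrowCongr π (MulEquiv.refl G)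
  map_one' := by ext f i; rfl
  map_mul' := by intro π σ; ext f i; rfl

/-- The wreath product `G ≀ Sₙ`. -/
abbrev WreathProduct (G : Type*) [Group G] (n : ℕ) :=
  SemidirectProduct (Fin n → G) (Equiv.Perm (Fin n)) (wreathHom G n)

/-- The subgroup `H_{m,n}` of `G ≀ Sₙ` consisting of elements whose permutation part fixes all
1-based points `j` with `m+1 ≤ j ≤ n`, i.e. all 0-based points `j` with `m ≤ j`. -/
noncomputable def Hmn (G : Type*) [Group G] (n m : ℕ) : Subgroup (WreathProduct G n) :=
  Subgroup.comap SemidirectProduct.rightHom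
    (⨅ j : {j : Fin n // m ≤ (j : ℕ)}, MulAction.stabilizer (Equiv.Perm (Fin n)) (j : Fin n))

/-- The group algebra of a subgroup `H ≤ K`, as a subalgebra of `ℂ[K]`. -/
noncomputable def groupSubalgebra (K : Type*) [Group K] (H : Subgroup K) :
    Subalgebra ℂ (MonoidAlgebra ℂ K) :=
  Algebra.adjoin ℂ (Set.range fun h : H => MonoidAlgebra.of ℂ K (h : K))

namespace RelComm

open scoped Classical

variable {G : Type} [Group G] [Fintype G] {n : ℕ}


open scoped Classical

variable {G : Type} [Group G] [Fintype G] {n : ℕ}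

noncomputable instance : Fintype (WreathProduct G n) :=
  Fintype.ofBijective (fun p : (Fin n → G) × Equiv.Perm (Fin n) =>
    (⟨p.1, p.2⟩ : WreathProduct G n))
    ⟨fun a b h => by
      cases a; cases b
      simpa [Prod.ext_iff] using And.intro (congrArg SemidirectProduct.left h)
        (congrArg SemidirectProduct.right h),
     fun w => ⟨(w.left, w.right), rfl⟩⟩

/-- `of' w` is the basis element of the group algebra. -/
noncomputable abbrev of' (w : WreathProduct G n) : MonoidAlgebra ℂ (WreathProduct G n) :=
  MonoidAlgebra.of ℂ (WreathProduct G n) w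

/-- Support contained in a subgroup. -/
def suppIn (S : Subgroup (WreathProduct G n)) (b : MonoidAlgebra ℂ (WreathProduct G n)) : Prop :=
  ∀ w, b.coeff w ≠ 0 → w ∈ S

/-- Commutation with (the image of) a subgroup. -/
def commWith (S : Subgroup (WreathProduct G n)) (b : MonoidAlgebra ℂ (WreathProduct G n)) : Prop :=
  ∀ t ∈ S, of' t * b = b * of' t

lemma coeff_conj {S : Subgroup (WreathProduct G n)} {b : MonoidAlgebra ℂ (WreathProduct G n)}
    (hb : commWith S b) {h : WreathProduct G n} (hh : h ∈ S) (w : WreathProduct G n) :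
    b.coeff (h * w * h⁻¹) = b.coeff w := by
  have h1 : (b * of' h).coeff (h * w) = b.coeff (h * w * h⁻¹) := by
    simpa using MonoidAlgebra.coeff_mul_single_apply b 1 h (h * w)
  have h2 : (of' h * b).coeff (h * w) = b.coeff w := by
    have := MonoidAlgebra.coeff_single_mul_apply b (1 : ℂ) h (h * w)
    simpa [mul_assoc] using this
  rw [← h1, ← hb h hh, h2]

lemma sum_of_apply {ι : Type*} (s : Finset ι) (f : ι → WreathProduct G n) (w : WreathProduct G n) :
    (∑ i ∈ s, of' (f i)).coeff w = ((s.filter fun i => f i = w).card : ℂ) := by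
  rw [MonoidAlgebra.coeff_sum, Finset.sum_apply']
  rw [← Finset.sum_boole]
  apply Finset.sum_congr rfl
  intro i _
  simp [MonoidAlgebra.of_apply, Finsupp.single_apply]

/-- The finset of elements of a subgroup. -/
noncomputable def FS (S : Subgroup (WreathProduct G n)) : Finset (WreathProduct G n) :=
  Finset.univ.filter fun t => t ∈ S

lemma mem_FS {S : Subgroup (WreathProduct G n)} {t : WreathProduct G n} : t ∈ FS S ↔ t ∈ S := by
  simp [FS]

/-- Sum of the conjugates of `y` by all elements of `S`. -/
noncomputable def conjSum (S : Subgroup (WreathProduct G n)) (y : WreathProduct G n) :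
    MonoidAlgebra ℂ (WreathProduct G n) :=
  ∑ t ∈ FS S, of' (t * y * t⁻¹)

lemma conjSum_commWith (S : Subgroup (WreathProduct G n)) (y : WreathProduct G n) :
    commWith S (conjSum S y) := by
  intro t₀ ht₀
  rw [conjSum, Finset.mul_sum, Finset.sum_mul]
  refine Finset.sum_bij' (fun t _ => t₀ * t) (fun t _ => t₀⁻¹ * t) ?_ ?_ ?_ ?_ ?_
  · intro t ht; rw [mem_FS] at *; exact S.mul_mem ht₀ ht
  · intro t ht; rw [mem_FS] at *; exact S.mul_mem (S.inv_mem ht₀) ht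
  · intro t ht; group
  · intro t ht; group
  · intro t ht
    rw [← map_mul, ← map_mul]
    congr 1
    group

lemma conjSum_apply (S : Subgroup (WreathProduct G n)) (y w : WreathProduct G n) :
    (conjSum S y).coeff w = (((FS S).filter fun t => t * y * t⁻¹ = w).card : ℂ) :=
  sum_of_apply _ _ _

lemma conjSum_suppIn (S : Subgroup (WreathProduct G n)) (y : WreathProduct G n)
    (hw : ∀ t ∈ S, t * y * t⁻¹ ∈ S → True) :
    True := trivial

lemma conjSum_exists {S : Subgroup (WreathProduct G n)} {y w : WreathProduct G n}
    (h : (conjSum S y).coeff w ≠ 0) : ∃ t ∈ S, t * y * t⁻¹ = w := by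
  rw [conjSum_apply] at h
  have : ((FS S).filter fun t => t * y * t⁻¹ = w).Nonempty := by
    rw [Finset.nonempty_iff_ne_empty]
    intro he
    rw [he] at h; simp at h
  obtain ⟨t, ht⟩ := this
  rw [Finset.mem_filter, mem_FS] at ht
  exact ⟨t, ht.1, ht.2⟩

lemma conjSum_apply_self_ne_zero (S : Subgroup (WreathProduct G n)) (y : WreathProduct G n) :
    (conjSum S y).coeff y ≠ 0 := by
  rw [conjSum_apply]
  rw [Nat.cast_ne_zero]
  rw [← Nat.pos_iff_ne_zero, Finset.card_pos]
  exact ⟨1, by simp [Finset.mem_filter, mem_FS, Subgroup.one_mem]⟩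

lemma commute_of_commWith_suppIn {S : Subgroup (WreathProduct G n)}
    {b c : MonoidAlgebra ℂ (WreathProduct G n)}
    (hb : commWith S b) (hc : suppIn S c) : b * c = c * b := by
  have hc' : c = ∑ w ∈ c.coeff.support, MonoidAlgebra.single w (c.coeff w) := by
    conv_lhs => rw [← MonoidAlgebra.sum_coeff_single c]
    rfl
  rw [hc']
  rw [Finset.mul_sum, Finset.sum_mul]
  apply Finset.sum_congr rfl
  intro w hw
  have hwS : w ∈ S := hc w (Finsupp.mem_support_iff.mp hw)
  have h1 : MonoidAlgebra.single w (c.coeff w) = (c.coeff w) • of' w := by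
    simp [MonoidAlgebra.of_apply, MonoidAlgebra.smul_single']
  rw [h1, mul_smul_comm, smul_mul_assoc, hb w hwS]




open scoped Classical

variable {G : Type} [Group G] [Fintype G] {n : ℕ}

lemma wreath_apply (π : Equiv.Perm (Fin n)) (f : Fin n → G) (p : Fin n) :
    (wreathHom G n π f) p = f (π⁻¹ p) := rfl

lemma conj_right (t y : WreathProduct G n) :
    (t * y * t⁻¹).right = t.right * y.right * t.right⁻¹ := by
  simp [SemidirectProduct.mul_right, SemidirectProduct.inv_right]

lemma conj_left (t y : WreathProduct G n) (p : Fin n) :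
    (t * y * t⁻¹).left p
      = t.left p * y.left (t.right⁻¹ p) * (t.left (t.right (y.right⁻¹ (t.right⁻¹ p))))⁻¹ := by
  simp only [SemidirectProduct.mul_left, SemidirectProduct.inv_left,
    SemidirectProduct.mul_right, map_mul, map_inv]
  simp only [Pi.mul_apply, mul_assoc]
  rfl

/-- The set of points where `y` is "active". -/
noncomputable def Sfin (y : WreathProduct G n) : Finset (Fin n) :=
  Finset.univ.filter fun p => y.right p ≠ p ∨ y.left p ≠ 1

lemma mem_Sfin {y : WreathProduct G n} {p : Fin n} :
    p ∈ Sfin y ↔ y.right p ≠ p ∨ y.left p ≠ 1 := by simp [Sfin]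

lemma not_mem_Sfin {y : WreathProduct G n} {p : Fin n} :
    p ∉ Sfin y ↔ y.right p = p ∧ y.left p = 1 := by
  rw [mem_Sfin]; tauto

/-- Degree: size of the active set. -/
noncomputable def ddeg (y : WreathProduct G n) : ℕ := (Sfin y).card

lemma mem_Sfin_conj (t y : WreathProduct G n) (p : Fin n) :
    p ∈ Sfin (t * y * t⁻¹) ↔ t.right⁻¹ p ∈ Sfin y := by
  rw [mem_Sfin, mem_Sfin, conj_right, conj_left]
  by_cases hm : y.right (t.right⁻¹ p) = t.right⁻¹ p
  · have h1 : (t.right * y.right * t.right⁻¹) p = p := by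
      simp only [Equiv.Perm.mul_apply, hm]; simp
    have h2 : y.right⁻¹ (t.right⁻¹ p) = t.right⁻¹ p := by
      conv_lhs => rw [← hm]
      simp
    rw [h1, h2]
    simp only [hm, ne_eq, not_true_eq_false, false_or]
    have h3 : t.right (t.right⁻¹ p) = p := by simp
    rw [h3]
    exact not_congr conj_eq_one_iff
  · have h1 : (t.right * y.right * t.right⁻¹) p ≠ p := by
      simp only [Equiv.Perm.mul_apply]
      intro hc
      apply hm
      have := congrArg (⇑t.right⁻¹) hc
      simpa using this
    have h1' : ¬ t.right (y.right (t.right⁻¹ p)) = p := by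
      simpa [Equiv.Perm.mul_apply] using h1
    exact iff_of_true (Or.inl h1') (Or.inl hm)

lemma Sfin_mul_subset (a b : WreathProduct G n) : Sfin (a * b) ⊆ Sfin a ∪ Sfin b := by
  intro p hp
  by_contra hc
  rw [Finset.mem_union, not_or] at hc
  obtain ⟨ha, hb⟩ := hc
  rw [not_mem_Sfin] at ha hb
  rw [mem_Sfin] at hp
  rcases hp with hp | hp
  · apply hp
    rw [SemidirectProduct.mul_right, Equiv.Perm.mul_apply, hb.1, ha.1]
  · apply hp
    rw [SemidirectProduct.mul_left, Pi.mul_apply, ha.2, one_mul, wreath_apply]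
    have : a.right⁻¹ p = p := by
      have := congrArg (⇑a.right⁻¹) ha.1
      simpa using this.symm
    rw [this, hb.2]

/-- Extend a partial injection to a permutation fixing a prescribed set. -/
lemma extendPerm (f : Fin n → Fin n) (A B : Finset (Fin n))
    (hinj : ∀ p ∈ A, ∀ q ∈ A, f p = f q → p = q)
    (hBA : ∀ p ∈ B, p ∉ A)
    (hfB : ∀ p ∈ A, f p ∉ B) :
    ∃ σ : Equiv.Perm (Fin n), (∀ p ∈ A, σ p = f p) ∧ (∀ p ∈ B, σ p = p) := by
  classical
  set I : Finset (Fin n) := A.image f with hI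
  have hcardI : I.card = A.card := Finset.card_image_of_injOn (fun p hp q hq => hinj p hp q hq)
  set C₁ : Finset (Fin n) := Finset.univ \ (A ∪ B) with hC₁
  set C₂ : Finset (Fin n) := Finset.univ \ (I ∪ B) with hC₂
  have hIB : Disjoint I B := by
    rw [Finset.disjoint_left]
    intro x hx hxB
    obtain ⟨p, hp, rfl⟩ := Finset.mem_image.mp hx
    exact hfB p hp hxB
  have hAB : Disjoint A B := by
    rw [Finset.disjoint_right]
    exact hBA
  have hcard : C₁.card = C₂.card := by
    rw [hC₁, hC₂, Finset.card_sdiff_of_subset (Finset.subset_univ _),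
      Finset.card_sdiff_of_subset (Finset.subset_univ _),
      Finset.card_union_of_disjoint hAB, Finset.card_union_of_disjoint hIB, hcardI]
  set e := Finset.equivOfCardEq hcard with he
  set g : Fin n → Fin n := fun p =>
    if hp : p ∈ A then f p else if hpB : p ∈ B then p else ↑(e ⟨p, by
      rw [hC₁, Finset.mem_sdiff, Finset.mem_union]
      exact ⟨Finset.mem_univ _, by tauto⟩⟩) with hg
  have hgA : ∀ p ∈ A, g p = f p := fun p hp => by simp [hg, hp]
  have hgB : ∀ p ∈ B, g p = p := fun p hp => by
    have : p ∉ A := hBA p hp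
    simp [hg, this, hp]
  have hranges : ∀ p, (p ∈ A → g p ∈ I) ∧ (p ∈ B → g p ∈ B) ∧ (p ∉ A → p ∉ B → g p ∈ C₂) := by
    intro p
    refine ⟨fun hp => ?_, fun hp => ?_, fun h1 h2 => ?_⟩
    · rw [hgA p hp]; exact Finset.mem_image_of_mem f hp
    · rw [hgB p hp]; exact hp
    · simp only [hg, h1, h2, dif_neg, not_false_iff]
      exact (e _).2
  have hginj : Function.Injective g := by
    intro p q hpq
    by_cases hpA : p ∈ A <;> by_cases hqA : q ∈ A
    · exact hinj p hpA q hqA (by rwa [hgA p hpA, hgA q hqA] at hpq)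
    · exfalso
      by_cases hqB : q ∈ B
      · have h1 := (hranges p).1 hpA
        rw [hpq, hgB q hqB] at h1
        exact Finset.disjoint_left.mp hIB h1 hqB
      · have h1 := (hranges p).1 hpA
        have h2 := (hranges q).2.2 hqA hqB
        rw [hpq] at h1
        rw [hC₂, Finset.mem_sdiff, Finset.mem_union] at h2
        exact h2.2 (Or.inl h1)
    · exfalso
      by_cases hpB : p ∈ B
      · have h1 := (hranges q).1 hqA
        rw [← hpq, hgB p hpB] at h1
        exact Finset.disjoint_left.mp hIB h1 hpB
      · have h1 := (hranges q).1 hqA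
        have h2 := (hranges p).2.2 hpA hpB
        rw [← hpq] at h1
        rw [hC₂, Finset.mem_sdiff, Finset.mem_union] at h2
        exact h2.2 (Or.inl h1)
    · by_cases hpB : p ∈ B <;> by_cases hqB : q ∈ B
      · rwa [hgB p hpB, hgB q hqB] at hpq
      · exfalso
        have h2 := (hranges q).2.2 hqA hqB
        rw [← hpq, hgB p hpB] at h2
        rw [hC₂, Finset.mem_sdiff, Finset.mem_union] at h2
        exact h2.2 (Or.inr hpB)
      · exfalso
        have h2 := (hranges p).2.2 hpA hpB
        rw [hpq, hgB q hqB] at h2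
        rw [hC₂, Finset.mem_sdiff, Finset.mem_union] at h2
        exact h2.2 (Or.inr hqB)
      · have h2p := (hranges p).2.2 hpA hpB
        have h2q := (hranges q).2.2 hqA hqB
        simp only [hg, hpA, hqA, hpB, hqB, dif_neg, not_false_iff] at hpq
        have := e.injective (Subtype.ext hpq)
        exact congrArg Subtype.val this
  refine ⟨Equiv.ofBijective g (Finite.injective_iff_bijective.mp hginj), ?_, ?_⟩
  · intro p hp; exact hgA p hp
  · intro p hp; exact hgB p hp




open scoped Classical

variable {G : Type} [Group G] [Fintype G] {n : ℕ}

lemma mem_Hmn {m : ℕ} {x : WreathProduct G n} :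
    x ∈ Hmn G n m ↔ ∀ p : Fin n, m ≤ (p : ℕ) → x.right p = p := by
  simp only [Hmn, Subgroup.mem_comap, Subgroup.mem_iInf, MulAction.mem_stabilizer_iff]
  constructor
  · intro h p hp
    simpa [Equiv.Perm.smul_def, SemidirectProduct.rightHom_eq_right] using h ⟨p, hp⟩
  · intro h j
    simpa [Equiv.Perm.smul_def, SemidirectProduct.rightHom_eq_right] using h j.1 j.2

lemma Hmn_mono {m₁ m₂ : ℕ} (h : m₁ ≤ m₂) : Hmn G n m₁ ≤ Hmn G n m₂ := by
  intro x hx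
  rw [mem_Hmn] at *
  exact fun p hp => hx p (le_trans h hp)

lemma supp_right_sub_Sfin (y : WreathProduct G n) : y.right.support ⊆ Sfin y := by
  intro p hp
  rw [Equiv.Perm.mem_support] at hp
  exact mem_Sfin.mpr (Or.inl hp)

/-- The cycle-of-`s` part of `y`. -/
noncomputable def uP (y : WreathProduct G n) (s : Fin n) : WreathProduct G n :=
  ⟨fun p => if p ∈ (y.right.cycleOf s).support then y.left p else 1, y.right.cycleOf s⟩

/-- The complementary part of `y`. -/
noncomputable def vP (y : WreathProduct G n) (s : Fin n) : WreathProduct G n :=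
  ⟨fun p => if p ∈ (y.right.cycleOf s).support then 1 else y.left p,
   (y.right.cycleOf s)⁻¹ * y.right⟩

lemma uP_right (y : WreathProduct G n) (s : Fin n) : (uP y s).right = y.right.cycleOf s := rfl
lemma vP_right (y : WreathProduct G n) (s : Fin n) :
    (vP y s).right = (y.right.cycleOf s)⁻¹ * y.right := rfl

lemma s_mem_suppc {y : WreathProduct G n} {s : Fin n} (hys : y.right s ≠ s) :
    s ∈ (y.right.cycleOf s).support := by
  rw [Equiv.Perm.mem_support_cycleOf_iff]
  exact ⟨Equiv.Perm.SameCycle.refl _ _, Equiv.Perm.mem_support.mpr hys⟩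

lemma suppc_le (y : WreathProduct G n) (s : Fin n) :
    (y.right.cycleOf s).support ⊆ y.right.support :=
  Equiv.Perm.support_cycleOf_le _ _

lemma c_apply_mem {y : WreathProduct G n} {s p : Fin n}
    (hp : p ∈ (y.right.cycleOf s).support) : y.right.cycleOf s p = y.right p := by
  rw [Equiv.Perm.mem_support_cycleOf_iff] at hp
  rw [Equiv.Perm.cycleOf_apply, if_pos hp.1]

lemma c_fix {y : WreathProduct G n} {s p : Fin n}
    (hp : p ∉ (y.right.cycleOf s).support) : y.right.cycleOf s p = p := by
  rwa [← Equiv.Perm.notMem_support]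

lemma suppc_apply_closed {y : WreathProduct G n} {s p : Fin n} :
    y.right p ∈ (y.right.cycleOf s).support ↔ p ∈ (y.right.cycleOf s).support := by
  rw [Equiv.Perm.mem_support_cycleOf_iff, Equiv.Perm.mem_support_cycleOf_iff]
  constructor
  · rintro ⟨h1, h2⟩
    exact ⟨Equiv.Perm.sameCycle_apply_right.mp h1, h2⟩
  · rintro ⟨h1, h2⟩
    exact ⟨Equiv.Perm.sameCycle_apply_right.mpr h1, h2⟩

lemma uv_eq (y : WreathProduct G n) (s : Fin n) : uP y s * vP y s = y := by
  refine SemidirectProduct.ext ?_ ?_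
  · funext p
    rw [SemidirectProduct.mul_left]
    rw [Pi.mul_apply, wreath_apply]
    rw [uP_right]
    by_cases hp : p ∈ (y.right.cycleOf s).support
    · have hinv : (y.right.cycleOf s)⁻¹ p ∈ (y.right.cycleOf s).support := by
        rw [← Equiv.Perm.support_inv] at hp ⊢
        exact Equiv.Perm.apply_mem_support.mpr hp
      show (if p ∈ _ then y.left p else 1) * (if ((y.right.cycleOf s)⁻¹ p) ∈ _ then 1 else
        y.left ((y.right.cycleOf s)⁻¹ p)) = y.left p
      rw [if_pos hp, if_pos hinv, mul_one]
    · have hfix : (y.right.cycleOf s)⁻¹ p = p := by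
        have := c_fix (y := y) (s := s) hp
        have := congrArg (⇑(y.right.cycleOf s)⁻¹) this
        simpa using this.symm
      show (if p ∈ _ then y.left p else 1) * (if ((y.right.cycleOf s)⁻¹ p) ∈ _ then 1 else
        y.left ((y.right.cycleOf s)⁻¹ p)) = y.left p
      rw [if_neg hp, hfix, if_neg hp, one_mul]
  · rw [SemidirectProduct.mul_right, uP_right, vP_right]
    group

lemma Sfin_uP {y : WreathProduct G n} {s : Fin n} :
    Sfin (uP y s) = (y.right.cycleOf s).support := by
  ext p
  rw [mem_Sfin, uP_right]
  constructor
  · rintro (h | h)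
    · exact Equiv.Perm.mem_support.mpr h
    · show p ∈ _
      by_contra hc
      apply h
      show (if p ∈ (y.right.cycleOf s).support then y.left p else 1) = 1
      rw [if_neg hc]
  · intro hp
    exact Or.inl (Equiv.Perm.mem_support.mp hp)

lemma vP_fix_suppc {y : WreathProduct G n} {s p : Fin n}
    (hp : p ∈ (y.right.cycleOf s).support) :
    (vP y s).right p = p ∧ (vP y s).left p = 1 := by
  constructor
  · rw [vP_right, Equiv.Perm.mul_apply]
    have h1 : y.right p = y.right.cycleOf s p := (c_apply_mem hp).symm
    rw [h1]
    simp
  · show (if p ∈ (y.right.cycleOf s).support then 1 else y.left p) = 1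
    rw [if_pos hp]

lemma vP_eq_off_suppc {y : WreathProduct G n} {s p : Fin n}
    (hp : p ∉ (y.right.cycleOf s).support) :
    (vP y s).right p = y.right p ∧ (vP y s).left p = y.left p := by
  constructor
  · rw [vP_right, Equiv.Perm.mul_apply]
    have h1 : y.right p ∉ (y.right.cycleOf s).support := by
      rwa [suppc_apply_closed]
    have := c_fix (y := y) (s := s) h1
    have := congrArg (⇑(y.right.cycleOf s)⁻¹) this
    simpa using this.symm
  · show (if p ∈ (y.right.cycleOf s).support then 1 else y.left p) = y.left p
    rw [if_neg hp]

lemma Sfin_vP {y : WreathProduct G n} {s : Fin n} :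
    Sfin (vP y s) = Sfin y \ (y.right.cycleOf s).support := by
  ext p
  rw [Finset.mem_sdiff, mem_Sfin, mem_Sfin]
  by_cases hp : p ∈ (y.right.cycleOf s).support
  · obtain ⟨h1, h2⟩ := vP_fix_suppc (y := y) (s := s) hp
    simp [h1, h2, hp]
  · obtain ⟨h1, h2⟩ := vP_eq_off_suppc (y := y) (s := s) hp
    simp [h1, h2, hp]

lemma Sfin_vP_disj {y : WreathProduct G n} {s : Fin n} :
    ∀ p ∈ Sfin (vP y s), p ∉ (y.right.cycleOf s).support := by
  intro p hp
  rw [Sfin_vP, Finset.mem_sdiff] at hp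
  exact hp.2

lemma suppc_sub_Sfin {y : WreathProduct G n} {s : Fin n} :
    (y.right.cycleOf s).support ⊆ Sfin y :=
  fun p hp => supp_right_sub_Sfin y (suppc_le y s hp)

lemma ddeg_split (y : WreathProduct G n) (s : Fin n) :
    ddeg y = ddeg (uP y s) + ddeg (vP y s) := by
  rw [ddeg, ddeg, ddeg, Sfin_uP, Sfin_vP]
  rw [Finset.card_sdiff_of_subset suppc_sub_Sfin]
  have h := Finset.card_le_card (suppc_sub_Sfin (y := y) (s := s))
  omega

lemma ddeg_vP_lt {y : WreathProduct G n} {s : Fin n} (hys : y.right s ≠ s) :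
    ddeg (vP y s) < ddeg y := by
  have h1 := ddeg_split y s
  have h2 : 0 < ddeg (uP y s) := by
    rw [ddeg, Finset.card_pos, Sfin_uP]
    exact ⟨s, s_mem_suppc hys⟩
  omega

lemma uP_mem_K {m : ℕ} {y : WreathProduct G n} {s : Fin n} (hy : y ∈ Hmn G n m) :
    uP y s ∈ Hmn G n m := by
  rw [mem_Hmn] at hy ⊢
  intro p hp
  rw [uP_right]
  apply c_fix
  intro hc
  have := suppc_le y s hc
  rw [Equiv.Perm.mem_support] at this
  exact this (hy p hp)

lemma vP_mem_H {m : ℕ} {y : WreathProduct G n} {s : Fin n}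
    (hy : y ∈ Hmn G n m) (hs1 : (s : ℕ) = m - 1) (hm2 : 2 ≤ m) (hys : y.right s ≠ s) :
    vP y s ∈ Hmn G n (m - 1) := by
  rw [mem_Hmn] at hy ⊢
  intro p hp
  by_cases hpm : m ≤ (p : ℕ)
  · have h1 : p ∉ (y.right.cycleOf s).support := by
      intro hc
      have := suppc_le y s hc
      rw [Equiv.Perm.mem_support] at this
      exact this (hy p hpm)
    rw [(vP_eq_off_suppc h1).1]
    exact hy p hpm
  · have hps : p = s := by
      apply Fin.ext
      rw [hs1]
      omega
    subst hps
    exact (vP_fix_suppc (s_mem_suppc hys)).1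

/-- transfer a `K`-conjugator of `uP` to an `H`-conjugator. -/
lemma conj_transfer {m : ℕ} (y : WreathProduct G n) (s : Fin n)
    (hs1 : (s : ℕ) = m - 1) (hm2 : 2 ≤ m) (hy : y ∈ Hmn G n m)
    (k : WreathProduct G n) (hk : k ∈ Hmn G n m)
    (hks : (k * uP y s * k⁻¹).right s ≠ s) :
    ∃ h₁ ∈ Hmn G n (m - 1), h₁ * uP y s * h₁⁻¹ = k * uP y s * k⁻¹ := by
  have hconj := conj_right k (uP y s)
  rw [uP_right] at hconj
  have hmove : y.right.cycleOf s (k.right⁻¹ s) ≠ k.right⁻¹ s := by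
    intro hc
    apply hks
    rw [hconj, Equiv.Perm.mul_apply, Equiv.Perm.mul_apply, hc]
    simp
  have hmem : k.right⁻¹ s ∈ (y.right.cycleOf s).support := Equiv.Perm.mem_support.mpr hmove
  rw [Equiv.Perm.mem_support_cycleOf_iff] at hmem
  obtain ⟨j, hj⟩ := hmem.1
  have hcyc : (y.right.cycleOf s ^ j) s = k.right⁻¹ s := by
    rw [Equiv.Perm.cycleOf_zpow_apply_self, hj]
  refine ⟨k * (uP y s) ^ j, ?_, ?_⟩
  · rw [mem_Hmn]
    intro p hp
    have hr : (k * (uP y s) ^ j).right = k.right * (y.right.cycleOf s) ^ j := by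
      rw [SemidirectProduct.mul_right]
      congr 1
      have : ((uP y s) ^ j).right = ((uP y s).right) ^ j := by
        rw [← SemidirectProduct.rightHom_eq_right]
        exact map_zpow SemidirectProduct.rightHom _ _
      rw [this, uP_right]
    rw [hr, Equiv.Perm.mul_apply]
    by_cases hpm : m ≤ (p : ℕ)
    · have h1 : y.right p = p := mem_Hmn.mp hy p hpm
      have h2 : y.right.cycleOf s p = p := by
        apply c_fix
        intro hc
        have := suppc_le y s hc
        rw [Equiv.Perm.mem_support] at this
        exact this h1
      rw [Equiv.Perm.zpow_apply_eq_self_of_apply_eq_self h2 j]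
      exact mem_Hmn.mp hk p hpm
    · have hps : p = s := by apply Fin.ext; rw [hs1]; omega
      subst hps
      rw [hcyc]
      simp
  · show k * (uP y s) ^ j * uP y s * (k * (uP y s) ^ j)⁻¹ = k * uP y s * k⁻¹
    group


lemma perm_apply_inv_self (σ : Equiv.Perm (Fin n)) (p : Fin n) : σ (σ⁻¹ p) = p := by
  simp

lemma perm_inv_apply_self (σ : Equiv.Perm (Fin n)) (p : Fin n) : σ⁻¹ (σ p) = p := by
  simp

lemma perm_fix_inv {σ : Equiv.Perm (Fin n)} {p : Fin n} (h : σ p = p) : σ⁻¹ p = p := by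
  conv_lhs => rw [← h]
  simp

lemma inv_apply_mem_support {σ : Equiv.Perm (Fin n)} {q : Fin n} (h : q ∈ σ.support) :
    σ⁻¹ q ∈ σ.support := by
  rw [← Equiv.Perm.support_inv] at h ⊢
  exact Equiv.Perm.apply_mem_support.mpr h

lemma right_fix_of_not_mem_Sfin {y : WreathProduct G n} {p : Fin n} (h : p ∉ Sfin y) :
    y.right p = p := (not_mem_Sfin.mp h).1

lemma left_one_of_not_mem_Sfin {y : WreathProduct G n} {p : Fin n} (h : p ∉ Sfin y) :
    y.left p = 1 := (not_mem_Sfin.mp h).2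

lemma apply_fix_of_not_mem_Sfin {y : WreathProduct G n} {q : Fin n}
    (h : y.right q ∉ Sfin y) : y.right q = q := by
  by_contra hc
  apply h
  apply supp_right_sub_Sfin
  exact Equiv.Perm.apply_mem_support.mpr (Equiv.Perm.mem_support.mpr hc)

lemma step3 {m : ℕ} (u v h₂ : WreathProduct G n)
    (hh₂ : h₂ ∈ Hmn G n (m - 1))
    (hu_supp : ∀ p, p ∉ u.right.support → u.left p = 1)
    (hdisj : ∀ p ∈ Sfin v, p ∉ u.right.support)
    (hdisj5 : ∀ p ∈ Sfin (h₂ * v * h₂⁻¹), p ∉ u.right.support) :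
    ∃ t ∈ Hmn G n (m - 1), t * u * t⁻¹ = u ∧ t * v * t⁻¹ = h₂ * v * h₂⁻¹ := by
  classical
  have hmem5 : ∀ p, p ∈ Sfin (h₂ * v * h₂⁻¹) ↔ h₂.right⁻¹ p ∈ Sfin v :=
    fun p => mem_Sfin_conj h₂ v p
  have hmem5' : ∀ p ∈ Sfin v, h₂.right p ∈ Sfin (h₂ * v * h₂⁻¹) := by
    intro p hp
    rw [hmem5]
    simpa using hp
  have hσ₅high : ∀ p : Fin n, m - 1 ≤ (p : ℕ) → h₂.right p = p := mem_Hmn.mp hh₂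
  set A := Sfin v ∪ u.right.support with hA
  set B := (Finset.univ.filter fun p : Fin n => m - 1 ≤ (p : ℕ)) \ A with hB
  set f : Fin n → Fin n := fun p => if p ∈ Sfin v then h₂.right p else p with hf
  have hfv : ∀ p ∈ Sfin v, f p = h₂.right p := fun p hp => by simp [hf, hp]
  have hfu : ∀ p ∈ u.right.support, f p = p := fun p hp => by
    have : p ∉ Sfin v := fun hc => hdisj p hc hp
    simp [hf, this]
  have hinj : ∀ p ∈ A, ∀ q ∈ A, f p = f q → p = q := by
    intro p hp q hq hpq
    rw [hA, Finset.mem_union] at hp hq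
    by_cases hpv : p ∈ Sfin v <;> by_cases hqv : q ∈ Sfin v
    · rw [hfv p hpv, hfv q hqv] at hpq
      exact h₂.right.injective hpq
    · exfalso
      have hqu : q ∈ u.right.support := hq.resolve_left hqv
      rw [hfv p hpv, hfu q hqu] at hpq
      exact hdisj5 (h₂.right p) (hmem5' p hpv) (hpq ▸ hqu)
    · exfalso
      have hpu : p ∈ u.right.support := hp.resolve_left hpv
      rw [hfu p hpu, hfv q hqv] at hpq
      exact hdisj5 (h₂.right q) (hmem5' q hqv) (hpq.symm ▸ hpu)
    · have hpu := hp.resolve_left hpv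
      have hqu := hq.resolve_left hqv
      rwa [hfu p hpu, hfu q hqu] at hpq
  have hBA : ∀ p ∈ B, p ∉ A := by
    intro p hp
    rw [hB, Finset.mem_sdiff] at hp
    exact hp.2
  have hfB : ∀ p ∈ A, f p ∉ B := by
    intro p hp hc
    rw [hB, Finset.mem_sdiff, Finset.mem_filter] at hc
    apply hc.2
    rw [hA, Finset.mem_union] at hp ⊢
    by_cases hpv : p ∈ Sfin v
    · rw [hfv p hpv] at hc ⊢
      have hfix : h₂.right (h₂.right p) = h₂.right p := hσ₅high _ hc.1.2
      have : h₂.right p = p := h₂.right.injective hfix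
      rw [this]
      exact Or.inl hpv
    · have hpu : p ∈ u.right.support := hp.resolve_left hpv
      rw [hfu p hpu] at hc ⊢
      exact Or.inr hpu
  obtain ⟨σt, hσA, hσB⟩ := extendPerm f A B hinj hBA hfB
  have hσv : ∀ p ∈ Sfin v, σt p = h₂.right p := by
    intro p hp
    rw [hσA p (Finset.mem_union.mpr (Or.inl hp)), hfv p hp]
  have hσu : ∀ p ∈ u.right.support, σt p = p := by
    intro p hp
    rw [hσA p (Finset.mem_union.mpr (Or.inr hp)), hfu p hp]
  have hσhigh : ∀ p : Fin n, m - 1 ≤ (p : ℕ) → σt p = p := by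
    intro p hp
    by_cases hpA : p ∈ A
    · rcases Finset.mem_union.mp hpA with h | h
      · rw [hσv p h, hσ₅high p hp]
      · exact hσu p h
    · apply hσB
      rw [hB, Finset.mem_sdiff, Finset.mem_filter]
      exact ⟨⟨Finset.mem_univ _, hp⟩, hpA⟩
  have hσu_inv : ∀ p ∈ u.right.support, σt⁻¹ p = p := fun p hp => perm_fix_inv (hσu p hp)
  have hσu_out : ∀ p, p ∉ u.right.support → σt⁻¹ p ∉ u.right.support := by
    intro p hp hc
    have := hσu _ hc
    rw [perm_apply_inv_self] at this
    exact hp (this ▸ hc)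
  have hqt_out : ∀ p, h₂.right⁻¹ p ∉ Sfin v → σt⁻¹ p ∉ Sfin v := by
    intro p hp hc
    apply hp
    have h1 : σt (σt⁻¹ p) = h₂.right (σt⁻¹ p) := hσv _ hc
    rw [perm_apply_inv_self] at h1
    have h2 : h₂.right⁻¹ p = σt⁻¹ p := by
      conv_lhs => rw [h1]
      simp
    rw [h2]
    exact hc
  have hqt_eq : ∀ p, h₂.right⁻¹ p ∈ Sfin v → σt⁻¹ p = h₂.right⁻¹ p := by
    intro p hp
    have h1 : σt (h₂.right⁻¹ p) = h₂.right (h₂.right⁻¹ p) := hσv _ hp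
    rw [perm_apply_inv_self] at h1
    have h2 := congrArg (⇑σt⁻¹) h1
    simpa using h2.symm
  set ht : Fin n → G := fun p => if p ∈ Sfin (h₂ * v * h₂⁻¹) then h₂.left p else 1 with hht
  set t : WreathProduct G n := ⟨ht, σt⟩ with htdef
  have htleft : t.left = ht := rfl
  have htright : t.right = σt := rfl
  have ht_mem : ∀ p ∈ Sfin (h₂ * v * h₂⁻¹), ht p = h₂.left p := fun p hp => by
    simp [hht, hp]
  have ht_nmem : ∀ p, p ∉ Sfin (h₂ * v * h₂⁻¹) → ht p = 1 := fun p hp => by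
    simp [hht, hp]
  have ht_usupp : ∀ p ∈ u.right.support, ht p = 1 := fun p hp =>
    ht_nmem p (fun hc => hdisj5 p hc hp)
  refine ⟨t, ?_, ?_, ?_⟩
  · rw [mem_Hmn]
    intro p hp
    rw [htright]
    exact hσhigh p hp
  · refine SemidirectProduct.ext ?_ ?_
    · funext p
      rw [conj_left, htleft, htright]
      by_cases hp : p ∈ u.right.support
      · have h1 : σt⁻¹ p = p := hσu_inv p hp
        have h2 : u.right⁻¹ p ∈ u.right.support := inv_apply_mem_support hp
        rw [h1, ht_usupp p hp, hσu _ h2, ht_usupp _ h2]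
        simp
      · have h1 : σt⁻¹ p ∉ u.right.support := hσu_out p hp
        have h2 : u.left (σt⁻¹ p) = 1 := hu_supp _ h1
        have h3 : u.right⁻¹ (σt⁻¹ p) = σt⁻¹ p :=
          perm_fix_inv (Equiv.Perm.notMem_support.mp h1)
        rw [h2, h3, perm_apply_inv_self, hu_supp p hp]
        simp
    · rw [conj_right, htright]
      refine Equiv.ext fun p => ?_
      simp only [Equiv.Perm.mul_apply]
      by_cases hp : p ∈ u.right.support
      · have h1 : σt⁻¹ p = p := hσu_inv p hp
        rw [h1]
        exact hσu _ (Equiv.Perm.apply_mem_support.mpr hp)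
      · have h1 : σt⁻¹ p ∉ u.right.support := hσu_out p hp
        have h2 : u.right (σt⁻¹ p) = σt⁻¹ p := Equiv.Perm.notMem_support.mp h1
        rw [h2, perm_apply_inv_self, Equiv.Perm.notMem_support.mp hp]
  · refine SemidirectProduct.ext ?_ ?_
    · funext p
      rw [conj_left, conj_left, htleft, htright]
      by_cases hq : h₂.right⁻¹ p ∈ Sfin v
      · have hp5 : p ∈ Sfin (h₂ * v * h₂⁻¹) := (hmem5 p).mpr hq
        have he : σt⁻¹ p = h₂.right⁻¹ p := hqt_eq p hq
        have e3 : ht (σt (v.right⁻¹ (h₂.right⁻¹ p)))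
            = h₂.left (h₂.right (v.right⁻¹ (h₂.right⁻¹ p))) := by
          by_cases hrv : v.right⁻¹ (h₂.right⁻¹ p) ∈ Sfin v
          · rw [hσv _ hrv]
            exact ht_mem _ (hmem5' _ hrv)
          · have hrq : v.right⁻¹ (h₂.right⁻¹ p) = h₂.right⁻¹ p := by
              by_contra hne
              apply hrv
              have hsup : h₂.right⁻¹ p ∈ v.right.support := by
                by_contra hns
                exact hne (perm_fix_inv (Equiv.Perm.notMem_support.mp hns))
              exact supp_right_sub_Sfin v (inv_apply_mem_support hsup)
            rw [hrq] at hrv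
            exact absurd hq hrv
        rw [he, e3, ht_mem p hp5]
      · have hqt : σt⁻¹ p ∉ Sfin v := hqt_out p hq
        have hp5 : p ∉ Sfin (h₂ * v * h₂⁻¹) := fun hc => hq ((hmem5 p).mp hc)
        have e1 : ht p = 1 := ht_nmem p hp5
        have e2 : v.left (σt⁻¹ p) = 1 := left_one_of_not_mem_Sfin hqt
        have e3 : v.left (h₂.right⁻¹ p) = 1 := left_one_of_not_mem_Sfin hq
        have e4 : v.right⁻¹ (σt⁻¹ p) = σt⁻¹ p :=
          perm_fix_inv (right_fix_of_not_mem_Sfin hqt)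
        have e5 : v.right⁻¹ (h₂.right⁻¹ p) = h₂.right⁻¹ p :=
          perm_fix_inv (right_fix_of_not_mem_Sfin hq)
        rw [e4, e5]
        simp only [perm_apply_inv_self]
        rw [e1, e2, e3]
        simp
    · rw [conj_right, conj_right, htright]
      refine Equiv.ext fun p => ?_
      simp only [Equiv.Perm.mul_apply]
      by_cases hq : h₂.right⁻¹ p ∈ Sfin v
      · have he : σt⁻¹ p = h₂.right⁻¹ p := hqt_eq p hq
        rw [he]
        by_cases hmv : v.right (h₂.right⁻¹ p) ∈ Sfin v
        · exact hσv _ hmv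
        · have hfix : v.right (h₂.right⁻¹ p) = h₂.right⁻¹ p := apply_fix_of_not_mem_Sfin hmv
          rw [hfix]
          exact hσv _ hq
      · have hqt : σt⁻¹ p ∉ Sfin v := hqt_out p hq
        have e1 : v.right (σt⁻¹ p) = σt⁻¹ p := right_fix_of_not_mem_Sfin hqt
        have e2 : v.right (h₂.right⁻¹ p) = h₂.right⁻¹ p := right_fix_of_not_mem_Sfin hq
        rw [e1, e2, perm_apply_inv_self, perm_apply_inv_self]

lemma caseII {m : ℕ} (y : WreathProduct G n) (s : Fin n)
    (hs1 : (s : ℕ) = m - 1) (hm2 : 2 ≤ m)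
    (hy : y ∈ Hmn G n m) (hys : y.right s ≠ s)
    (k h : WreathProduct G n) (hk : k ∈ Hmn G n m) (hh : h ∈ Hmn G n (m - 1))
    (hks : (k * uP y s * k⁻¹).right s ≠ s)
    (hdisj : ∀ p ∈ Sfin (k * uP y s * k⁻¹), p ∉ Sfin (h * vP y s * h⁻¹)) :
    ∃ h₀ ∈ Hmn G n (m - 1), (k * uP y s * k⁻¹) * (h * vP y s * h⁻¹) = h₀ * y * h₀⁻¹ := by
  obtain ⟨h₁, hh₁, he₁⟩ := conj_transfer y s hs1 hm2 hy k hk hks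
  set u := uP y s with hu
  set v := vP y s with hv
  set h₂ := h₁⁻¹ * h with hh₂def
  have hh₂ : h₂ ∈ Hmn G n (m - 1) := mul_mem (inv_mem hh₁) hh
  have hu_eq : u = h₁⁻¹ * (k * u * k⁻¹) * h₁⁻¹⁻¹ := by
    rw [← he₁]
    group
  have hv5_eq : h₂ * v * h₂⁻¹ = h₁⁻¹ * (h * v * h⁻¹) * h₁⁻¹⁻¹ := by
    rw [hh₂def]
    group
  have hdisj5 : ∀ p ∈ Sfin (h₂ * v * h₂⁻¹), p ∉ u.right.support := by
    intro p hp hc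
    rw [hv5_eq, mem_Sfin_conj] at hp
    have hc2 : p ∈ Sfin u := supp_right_sub_Sfin u hc
    rw [hu_eq, mem_Sfin_conj] at hc2
    exact hdisj _ hc2 hp
  have hu_supp : ∀ p, p ∉ u.right.support → u.left p = 1 := by
    intro p hp
    show (if p ∈ (y.right.cycleOf s).support then y.left p else 1) = 1
    rw [if_neg (by rwa [hu, uP_right] at hp)]
  have hdisjv : ∀ p ∈ Sfin v, p ∉ u.right.support := by
    intro p hp
    rw [hu, uP_right]
    exact Sfin_vP_disj p (hv ▸ hp)
  obtain ⟨t, htH, htu, htv⟩ := step3 u v h₂ hh₂ hu_supp hdisjv hdisj5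
  refine ⟨h₁ * t, mul_mem hh₁ htH, ?_⟩
  have hkey : (k * u * k⁻¹) * (h * v * h⁻¹) = h₁ * (u * (h₂ * v * h₂⁻¹)) * h₁⁻¹ := by
    rw [← he₁, hh₂def]
    group
  rw [hkey, ← htv, ← htu]
  rw [show (t * u * t⁻¹) * (t * v * t⁻¹) = t * (u * v) * t⁻¹ by group]
  rw [show u * v = y from uv_eq y s]
  group

lemma orbit_prop {S : Subgroup (WreathProduct G n)} {y : WreathProduct G n}
    {b₁ b₂ : MonoidAlgebra ℂ (WreathProduct G n)}
    (h₁ : commWith S b₁) (h₂ : commWith S b₂)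
    (s₁ : ∀ w, b₁.coeff w ≠ 0 → ∃ t ∈ S, t * y * t⁻¹ = w)
    (s₂ : ∀ w, b₂.coeff w ≠ 0 → ∃ t ∈ S, t * y * t⁻¹ = w) :
    b₂.coeff y • b₁ = b₁.coeff y • b₂ := by
  refine MonoidAlgebra.ext (Finsupp.ext fun w => ?_)
  rw [MonoidAlgebra.coeff_smul, MonoidAlgebra.coeff_smul, Finsupp.smul_apply, Finsupp.smul_apply]
  by_cases hw : ∃ t ∈ S, t * y * t⁻¹ = w
  · obtain ⟨t, ht, rfl⟩ := hw
    rw [coeff_conj h₁ ht, coeff_conj h₂ ht, smul_eq_mul, smul_eq_mul, mul_comm]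
  · have e1 : b₁.coeff w = 0 := by
      by_contra hc
      exact hw (s₁ w hc)
    have e2 : b₂.coeff w = 0 := by
      by_contra hc
      exact hw (s₂ w hc)
    rw [e1, e2, smul_zero, smul_zero]

/-- The generating set: `H`-class sums and `K`-class sums. -/
def ZS (S : Subgroup (WreathProduct G n)) : Set (MonoidAlgebra ℂ (WreathProduct G n)) :=
  {b | suppIn S b ∧ commWith S b}

/-- The (commutative) subalgebra generated by the two centers. -/
noncomputable def Acomm (m : ℕ) : Subalgebra ℂ (MonoidAlgebra ℂ (WreathProduct G n)) :=
  Algebra.adjoin ℂ (ZS (Hmn G n m) ∪ ZS (Hmn G n (m - 1)))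

lemma mul_comm_of_ZS {m : ℕ} :
    ∀ x ∈ ZS (Hmn G n m) ∪ ZS (Hmn G n (m - 1)),
      ∀ y ∈ ZS (Hmn G n m) ∪ ZS (Hmn G n (m - 1)), x * y = y * x := by
  intro x hx y hy
  have hsy : suppIn (Hmn G n m) y := by
    rcases hy with hy' | hy'
    · exact hy'.1
    · exact fun w hw => Hmn_mono (Nat.sub_le m 1) (hy'.1 w hw)
  have hsx : suppIn (Hmn G n m) x := by
    rcases hx with hx' | hx'
    · exact hx'.1
    · exact fun w hw => Hmn_mono (Nat.sub_le m 1) (hx'.1 w hw)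
  rcases hx with hx' | hx'
  · exact commute_of_commWith_suppIn hx'.2 hsy
  · rcases hy with hy' | hy'
    · exact (commute_of_commWith_suppIn hy'.2 hsx).symm
    · exact commute_of_commWith_suppIn hx'.2 hy'.1

lemma Acomm_comm {m : ℕ} {a b : MonoidAlgebra ℂ (WreathProduct G n)}
    (ha : a ∈ Acomm m) (hb : b ∈ Acomm m) : a * b = b * a := by
  have H1 : ∀ x ∈ ZS (Hmn G n m) ∪ ZS (Hmn G n (m - 1)), ∀ c ∈ Acomm m, x * c = c * x := by
    intro x hx c hc
    refine Algebra.adjoin_induction (fun z hz => mul_comm_of_ZS x hx z hz)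
      (fun r => (Algebra.commutes r x).symm)
      (fun z w _ _ ihz ihw => by rw [mul_add, add_mul, ihz, ihw])
      (fun z w _ _ ihz ihw => by rw [← mul_assoc, ihz, mul_assoc, ihw, ← mul_assoc]) hc
  refine Algebra.adjoin_induction (fun x hx => H1 x hx b hb)
    (fun r => Algebra.commutes r b)
    (fun x y _ _ ihx ihy => by rw [add_mul, mul_add, ihx, ihy])
    (fun x y _ _ ihx ihy => by rw [mul_assoc, ihy, ← mul_assoc, ihx, mul_assoc]) ha

lemma conjSum_mem_ZH {m : ℕ} {y : WreathProduct G n} (hy : y ∈ Hmn G n (m - 1)) :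
    conjSum (Hmn G n (m - 1)) y ∈ ZS (Hmn G n (m - 1)) := by
  constructor
  · intro w hw
    obtain ⟨t, ht, rfl⟩ := conjSum_exists hw
    exact mul_mem (mul_mem ht hy) (inv_mem ht)
  · exact conjSum_commWith _ _

lemma conjSum_mem_Acomm_of_H {m : ℕ} {y : WreathProduct G n} (hy : y ∈ Hmn G n (m - 1)) :
    conjSum (Hmn G n (m - 1)) y ∈ Acomm m :=
  Algebra.subset_adjoin (Or.inr (conjSum_mem_ZH hy))

lemma card_FS_ne_zero (S : Subgroup (WreathProduct G n)) : ((FS S).card : ℂ) ≠ 0 := by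
  rw [Nat.cast_ne_zero, ← Nat.pos_iff_ne_zero, Finset.card_pos]
  exact ⟨1, mem_FS.mpr (one_mem S)⟩

lemma mem_Acomm_of_commWith {m : ℕ} (b : MonoidAlgebra ℂ (WreathProduct G n))
    (hb : commWith (Hmn G n (m - 1)) b)
    (hT : ∀ w ∈ b.coeff.support, conjSum (Hmn G n (m - 1)) w ∈ Acomm m) : b ∈ Acomm m := by
  classical
  have hbex : b = ∑ w ∈ b.coeff.support, MonoidAlgebra.single w (b.coeff w) := by
    conv_lhs => rw [← MonoidAlgebra.sum_coeff_single b]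
    rfl
  have hof : ∀ w : WreathProduct G n, of' w = MonoidAlgebra.single w (1 : ℂ) := fun _ => rfl
  have hsingle : ∀ (t w : WreathProduct G n),
      of' t * MonoidAlgebra.single w (b.coeff w) * of' t⁻¹ = b.coeff w • of' (t * w * t⁻¹) := by
    intro t w
    rw [hof t, hof t⁻¹, hof (t * w * t⁻¹), MonoidAlgebra.single_mul_single,
      MonoidAlgebra.single_mul_single, MonoidAlgebra.smul_single']
    rw [one_mul, mul_one]
  have key : (((FS (Hmn G n (m - 1))).card : ℂ)) • b
      = ∑ w ∈ b.coeff.support, b.coeff w • conjSum (Hmn G n (m - 1)) w := by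
    have e1 : ∀ t ∈ FS (Hmn G n (m - 1)), of' t * b * of' t⁻¹ = b := by
      intro t ht
      rw [mem_FS] at ht
      rw [hb t ht, mul_assoc, ← map_mul, mul_inv_cancel, map_one, mul_one]
    calc (((FS (Hmn G n (m - 1))).card : ℂ)) • b
        = ∑ _t ∈ FS (Hmn G n (m - 1)), b := by
          rw [Finset.sum_const, Nat.cast_smul_eq_nsmul]
      _ = ∑ t ∈ FS (Hmn G n (m - 1)), of' t * b * of' t⁻¹ :=
          (Finset.sum_congr rfl e1).symm
      _ = ∑ t ∈ FS (Hmn G n (m - 1)), ∑ w ∈ b.coeff.support, b.coeff w • of' (t * w * t⁻¹) := by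
          refine Finset.sum_congr rfl fun t _ => ?_
          conv_lhs => rw [hbex]
          rw [Finset.mul_sum, Finset.sum_mul]
          exact Finset.sum_congr rfl fun w _ => hsingle t w
      _ = ∑ w ∈ b.coeff.support, ∑ t ∈ FS (Hmn G n (m - 1)), b.coeff w • of' (t * w * t⁻¹) :=
          Finset.sum_comm
      _ = ∑ w ∈ b.coeff.support, b.coeff w • conjSum (Hmn G n (m - 1)) w := by
          refine Finset.sum_congr rfl fun w _ => ?_
          rw [conjSum, Finset.smul_sum]
  have hbeq : b = (((FS (Hmn G n (m - 1))).card : ℂ))⁻¹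
      • ((((FS (Hmn G n (m - 1))).card : ℂ)) • b) := by
    rw [smul_smul, inv_mul_cancel₀ (card_FS_ne_zero _), one_smul]
  rw [hbeq, key]
  exact Subalgebra.smul_mem _ (Subalgebra.sum_mem _ fun w hw =>
    Subalgebra.smul_mem _ (hT w hw) _) _

lemma Sfin_conj_image (t y : WreathProduct G n) :
    Sfin (t * y * t⁻¹) = (Sfin y).image t.right := by
  ext q
  rw [mem_Sfin_conj, Finset.mem_image]
  constructor
  · intro h
    exact ⟨t.right⁻¹ q, h, by simp⟩
  · rintro ⟨a, ha, rfl⟩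
    simpa using ha

lemma ddeg_conj (t y : WreathProduct G n) : ddeg (t * y * t⁻¹) = ddeg y := by
  rw [ddeg, ddeg, Sfin_conj_image, Finset.card_image_of_injective _ t.right.injective]

lemma cond_conj_t {m : ℕ} {s : Fin n} (hs1 : (s : ℕ) = m - 1) {t : WreathProduct G n}
    (ht : t ∈ Hmn G n (m - 1)) (X Y : WreathProduct G n) :
    ((t * X * t⁻¹).right s ≠ s ∧ ∀ p ∈ Sfin (t * X * t⁻¹), p ∉ Sfin (t * Y * t⁻¹))
    ↔ (X.right s ≠ s ∧ ∀ p ∈ Sfin X, p ∉ Sfin Y) := by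
  have hts : t.right s = s := mem_Hmn.mp ht s (le_of_eq hs1.symm)
  have htsi : t.right⁻¹ s = s := perm_fix_inv hts
  have hrs : (t * X * t⁻¹).right s = t.right (X.right s) := by
    rw [conj_right]
    simp only [Equiv.Perm.mul_apply]
    rw [htsi]
  constructor
  · rintro ⟨h1, h2⟩
    refine ⟨?_, ?_⟩
    · intro hc
      apply h1
      rw [hrs, hc, hts]
    · intro p hp hpc
      refine h2 (t.right p) ?_ ?_
      · rw [mem_Sfin_conj]
        simpa using hp
      · rw [mem_Sfin_conj]
        simpa using hpc
  · rintro ⟨h1, h2⟩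
    refine ⟨?_, ?_⟩
    · intro hc
      apply h1
      rw [hrs] at hc
      have := congrArg (⇑t.right⁻¹) hc
      simp only [perm_inv_apply_self] at this
      rw [this, htsi]
    · intro p hp hpc
      rw [mem_Sfin_conj] at hp hpc
      exact h2 _ hp hpc


/-- The product of two conjugates. -/
noncomputable def termP (u v : WreathProduct G n)
    (q : WreathProduct G n × WreathProduct G n) : WreathProduct G n :=
  (q.1 * u * q.1⁻¹) * (q.2 * v * q.2⁻¹)

/-- The "case II" condition. -/
def condP (u v : WreathProduct G n) (s : Fin n)
    (q : WreathProduct G n × WreathProduct G n) : Prop :=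
  (q.1 * u * q.1⁻¹).right s ≠ s ∧
    ∀ p ∈ Sfin (q.1 * u * q.1⁻¹), p ∉ Sfin (q.2 * v * q.2⁻¹)

lemma termP_conj (t u v : WreathProduct G n) (q : WreathProduct G n × WreathProduct G n) :
    termP u v (t * q.1, t * q.2) = t * termP u v q * t⁻¹ := by
  unfold termP
  group

lemma condP_conj {m : ℕ} {s : Fin n} (hs1 : (s : ℕ) = m - 1) {t : WreathProduct G n}
    (ht : t ∈ Hmn G n (m - 1)) (u v : WreathProduct G n)
    (q : WreathProduct G n × WreathProduct G n) :
    condP u v s (t * q.1, t * q.2) ↔ condP u v s q := by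
  unfold condP
  have e1 : (t * q.1) * u * (t * q.1)⁻¹ = t * (q.1 * u * q.1⁻¹) * t⁻¹ := by group
  have e2 : (t * q.2) * v * (t * q.2)⁻¹ = t * (q.2 * v * q.2⁻¹) * t⁻¹ := by group
  rw [e1, e2]
  exact cond_conj_t hs1 ht _ _


lemma conjSum_mem_Acomm {m : ℕ} (hm2 : 2 ≤ m) (hmn : m ≤ n) :
    ∀ N : ℕ, ∀ y : WreathProduct G n, y ∈ Hmn G n m → ddeg y ≤ N →
      conjSum (Hmn G n (m - 1)) y ∈ Acomm m := by
  intro N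
  induction N with
  | zero =>
    intro y hy hd
    apply conjSum_mem_Acomm_of_H
    have hS : Sfin y = ∅ := Finset.card_eq_zero.mp (Nat.le_zero.mp hd)
    rw [mem_Hmn]
    intro p _
    have hp : p ∉ Sfin y := by
      rw [hS]
      exact Finset.notMem_empty p
    exact (not_mem_Sfin.mp hp).1
  | succ N ih =>
    intro y hyK hd
    by_cases hyH : y ∈ Hmn G n (m - 1)
    · exact conjSum_mem_Acomm_of_H hyH
    · have hsn : m - 1 < n := by omega
      set s : Fin n := ⟨m - 1, hsn⟩ with hsdef
      have hs1 : (s : ℕ) = m - 1 := rfl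
      have hys : y.right s ≠ s := by
        intro hc
        apply hyH
        rw [mem_Hmn] at hyK ⊢
        intro p hp
        by_cases hpm : m ≤ (p : ℕ)
        · exact hyK p hpm
        · have hpe : p = s := by
            apply Fin.ext
            rw [hs1]
            omega
          rw [hpe]
          exact hc
      have huK : uP y s ∈ Hmn G n m := uP_mem_K hyK
      have hvH : vP y s ∈ Hmn G n (m - 1) := vP_mem_H hyK hs1 hm2 hys
      set z := conjSum (Hmn G n m) (uP y s) with hz
      set w := conjSum (Hmn G n (m - 1)) (vP y s) with hw
      have hzA : z ∈ Acomm m := by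
        apply Algebra.subset_adjoin
        left
        constructor
        · intro w' hw'
          obtain ⟨t, ht, rfl⟩ := conjSum_exists hw'
          exact mul_mem (mul_mem ht huK) (inv_mem ht)
        · exact conjSum_commWith _ _
      have hwA : w ∈ Acomm m := Algebra.subset_adjoin (Or.inr (conjSum_mem_ZH hvH))
      set P := (FS (Hmn G n m)) ×ˢ (FS (Hmn G n (m - 1))) with hP
      have htermK : ∀ q ∈ P, termP (uP y s) (vP y s) q ∈ Hmn G n m := by
        intro q hq
        rw [hP, Finset.mem_product] at hq
        have h1 : q.1 ∈ Hmn G n m := mem_FS.mp hq.1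
        have h2 : q.2 ∈ Hmn G n (m - 1) := mem_FS.mp hq.2
        have h2' : q.2 ∈ Hmn G n m := Hmn_mono (Nat.sub_le m 1) h2
        exact mul_mem (mul_mem (mul_mem h1 huK) (inv_mem h1))
          (mul_mem (mul_mem h2' (Hmn_mono (Nat.sub_le m 1) hvH)) (inv_mem h2'))
      have hzw : z * w = ∑ q ∈ P, of' (termP (uP y s) (vP y s) q) := by
        rw [hz, hw, conjSum, conjSum, Finset.sum_mul_sum, hP, ← Finset.sum_product']
        exact Finset.sum_congr rfl fun q _ => (map_mul _ _ _).symm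
      set a₂ := ∑ q ∈ P.filter (condP (uP y s) (vP y s) s),
        of' (termP (uP y s) (vP y s) q) with ha₂
      set rr := ∑ q ∈ P.filter (fun q => ¬ condP (uP y s) (vP y s) s q),
        of' (termP (uP y s) (vP y s) q) with hrr
      have hsplit : a₂ + rr = z * w := by
        rw [ha₂, hrr, hzw]
        exact Finset.sum_filter_add_sum_filter_not _ _ _
      have hzwinv : commWith (Hmn G n (m - 1)) (z * w) := by
        intro t ht
        have h1 := conjSum_commWith (Hmn G n m) (uP y s) t (Hmn_mono (Nat.sub_le m 1) ht)
        have h2 := conjSum_commWith (Hmn G n (m - 1)) (vP y s) t ht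
        rw [← hz] at h1
        rw [← hw] at h2
        rw [← mul_assoc, h1, mul_assoc, h2, ← mul_assoc]
      have ha₂inv : commWith (Hmn G n (m - 1)) a₂ := by
        intro t ht
        have htK : t ∈ Hmn G n m := Hmn_mono (Nat.sub_le m 1) ht
        rw [ha₂, Finset.mul_sum, Finset.sum_mul]
        refine Finset.sum_bij' (fun q _ => (t * q.1, t * q.2))
          (fun q _ => (t⁻¹ * q.1, t⁻¹ * q.2)) ?_ ?_ ?_ ?_ ?_
        · intro q hq
          simp only [Finset.mem_filter, hP, Finset.mem_product] at hq ⊢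
          obtain ⟨⟨hq1, hq2⟩, hc⟩ := hq
          exact ⟨⟨mem_FS.mpr (mul_mem htK (mem_FS.mp hq1)),
            mem_FS.mpr (mul_mem ht (mem_FS.mp hq2))⟩,
            (condP_conj hs1 ht _ _ q).mpr hc⟩
        · intro q hq
          simp only [Finset.mem_filter, hP, Finset.mem_product] at hq ⊢
          obtain ⟨⟨hq1, hq2⟩, hc⟩ := hq
          exact ⟨⟨mem_FS.mpr (mul_mem (inv_mem htK) (mem_FS.mp hq1)),
            mem_FS.mpr (mul_mem (inv_mem ht) (mem_FS.mp hq2))⟩,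
            (condP_conj hs1 (inv_mem ht) _ _ q).mpr hc⟩
        · intro q hq
          show (t⁻¹ * (t * q.1), t⁻¹ * (t * q.2)) = q
          simp [Prod.ext_iff]
        · intro q hq
          show (t * (t⁻¹ * q.1), t * (t⁻¹ * q.2)) = q
          simp [Prod.ext_iff]
        · intro q hq
          show of' t * of' (termP (uP y s) (vP y s) q)
              = of' (termP (uP y s) (vP y s) (t * q.1, t * q.2)) * of' t
          rw [← map_mul, ← map_mul, termP_conj]
          congr 1
          group
      have hrrinv : commWith (Hmn G n (m - 1)) rr := by
        intro t ht
        have e : rr = z * w - a₂ := by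
          rw [← hsplit, add_sub_cancel_left]
        rw [e, mul_sub, sub_mul, hzwinv t ht, ha₂inv t ht]
      have horb : ∀ q ∈ P.filter (condP (uP y s) (vP y s) s),
          ∃ h₀ ∈ Hmn G n (m - 1), termP (uP y s) (vP y s) q = h₀ * y * h₀⁻¹ := by
        intro q hq
        rw [Finset.mem_filter, hP, Finset.mem_product] at hq
        obtain ⟨⟨hq1, hq2⟩, hc1, hc2⟩ := hq
        exact caseII y s hs1 hm2 hyK hys q.1 q.2 (mem_FS.mp hq1) (mem_FS.mp hq2) hc1 hc2
      set Ty := conjSum (Hmn G n (m - 1)) y with hTy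
      have hTycomm : commWith (Hmn G n (m - 1)) Ty := by
        rw [hTy]
        exact conjSum_commWith _ _
      have ha₂orb : ∀ w', a₂.coeff w' ≠ 0 → ∃ h₀ ∈ Hmn G n (m - 1), h₀ * y * h₀⁻¹ = w' := by
        intro w' hw'
        rw [ha₂, sum_of_apply] at hw'
        have hne : ((P.filter (condP (uP y s) (vP y s) s)).filter
            fun q => termP (uP y s) (vP y s) q = w').Nonempty := by
          rw [Finset.nonempty_iff_ne_empty]
          intro he
          rw [he] at hw'
          simp at hw'
        obtain ⟨q, hq⟩ := hne
        rw [Finset.mem_filter] at hq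
        obtain ⟨h₀, hh₀, he⟩ := horb q hq.1
        exact ⟨h₀, hh₀, by rw [← he, hq.2]⟩
      have hTyorb : ∀ w', Ty.coeff w' ≠ 0 → ∃ h₀ ∈ Hmn G n (m - 1), h₀ * y * h₀⁻¹ = w' := by
        intro w' hw'
        rw [hTy] at hw'
        exact conjSum_exists hw'
      have hprop : a₂.coeff y • Ty = Ty.coeff y • a₂ := orbit_prop hTycomm ha₂inv hTyorb ha₂orb
      have hane : a₂.coeff y ≠ 0 := by
        rw [ha₂, sum_of_apply, Nat.cast_ne_zero, ← Nat.pos_iff_ne_zero, Finset.card_pos]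
        refine ⟨(1, 1), ?_⟩
        rw [Finset.mem_filter, Finset.mem_filter, hP, Finset.mem_product]
        refine ⟨⟨⟨mem_FS.mpr (one_mem _), mem_FS.mpr (one_mem _)⟩, ?_⟩, ?_⟩
        · unfold condP
          simp only [one_mul, inv_one, mul_one]
          constructor
          · rw [uP_right, Equiv.Perm.cycleOf_apply_self]
            exact hys
          · intro p hp
            rw [Sfin_uP] at hp
            intro hc
            exact Sfin_vP_disj p hc hp
        · unfold termP
          simp only [one_mul, inv_one, mul_one]
          exact uv_eq y s
      have hrrmem : rr ∈ Acomm m := by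
        apply mem_Acomm_of_commWith rr hrrinv
        intro w' hw'
        have hw'' : rr.coeff w' ≠ 0 := Finsupp.mem_support_iff.mp hw'
        rw [hrr, sum_of_apply] at hw''
        have hne : ((P.filter fun q => ¬ condP (uP y s) (vP y s) s q).filter
            fun q => termP (uP y s) (vP y s) q = w').Nonempty := by
          rw [Finset.nonempty_iff_ne_empty]
          intro he
          rw [he] at hw''
          simp at hw''
        obtain ⟨q, hq⟩ := hne
        rw [Finset.mem_filter] at hq
        obtain ⟨hqPf, hwt⟩ := hq
        rw [Finset.mem_filter] at hqPf
        obtain ⟨hqP, hnc⟩ := hqPf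
        have hq1K : q.1 ∈ Hmn G n m := by
          rw [hP, Finset.mem_product] at hqP
          exact mem_FS.mp hqP.1
        have hq2H : q.2 ∈ Hmn G n (m - 1) := by
          rw [hP, Finset.mem_product] at hqP
          exact mem_FS.mp hqP.2
        by_cases hcase : (q.1 * uP y s * q.1⁻¹).right s = s
        · have hwH : w' ∈ Hmn G n (m - 1) := by
            rw [← hwt, mem_Hmn]
            intro p hp
            have hX : q.1 * uP y s * q.1⁻¹ ∈ Hmn G n m :=
              mul_mem (mul_mem hq1K huK) (inv_mem hq1K)
            have hY : q.2 * vP y s * q.2⁻¹ ∈ Hmn G n (m - 1) :=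
              mul_mem (mul_mem hq2H hvH) (inv_mem hq2H)
            show ((q.1 * uP y s * q.1⁻¹) * (q.2 * vP y s * q.2⁻¹)).right p = p
            rw [SemidirectProduct.mul_right, Equiv.Perm.mul_apply]
            by_cases hpm : m ≤ (p : ℕ)
            · rw [mem_Hmn.mp hY p (le_trans (Nat.sub_le m 1) hpm)]
              exact mem_Hmn.mp hX p hpm
            · have hpe : p = s := by
                apply Fin.ext
                rw [hs1]
                omega
              rw [hpe, mem_Hmn.mp hY s (le_of_eq hs1.symm)]
              exact hcase
          exact conjSum_mem_Acomm_of_H hwH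
        · have hnc2 : ∃ p ∈ Sfin (q.1 * uP y s * q.1⁻¹), p ∈ Sfin (q.2 * vP y s * q.2⁻¹) := by
            unfold condP at hnc
            push_neg at hnc
            exact hnc hcase
          obtain ⟨p, hp1, hp2⟩ := hnc2
          have hdlt : ddeg w' < ddeg y := by
            rw [← hwt]
            have h1 := Finset.card_le_card
              (Sfin_mul_subset (q.1 * uP y s * q.1⁻¹) (q.2 * vP y s * q.2⁻¹))
            have h3 := Finset.card_union_add_card_inter
              (Sfin (q.1 * uP y s * q.1⁻¹)) (Sfin (q.2 * vP y s * q.2⁻¹))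
            have h4 : 0 < ((Sfin (q.1 * uP y s * q.1⁻¹)) ∩ (Sfin (q.2 * vP y s * q.2⁻¹))).card :=
              Finset.card_pos.mpr ⟨p, Finset.mem_inter.mpr ⟨hp1, hp2⟩⟩
            have h5 : ddeg (q.1 * uP y s * q.1⁻¹) = ddeg (uP y s) := ddeg_conj _ _
            have h6 : ddeg (q.2 * vP y s * q.2⁻¹) = ddeg (vP y s) := ddeg_conj _ _
            have h7 : ddeg y = ddeg (uP y s) + ddeg (vP y s) := ddeg_split y s
            unfold ddeg at h5 h6 h7 ⊢
            unfold termP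
            omega
          have hwK : w' ∈ Hmn G n m := by
            rw [← hwt]
            exact htermK q hqP
          exact ih w' hwK (by omega)
      have hTyeq : Ty = (a₂.coeff y)⁻¹ • (Ty.coeff y • (z * w - rr)) := by
        have h1 : z * w - rr = a₂ := by
          rw [← hsplit, add_sub_cancel_right]
        rw [h1, ← hprop, smul_smul, inv_mul_cancel₀ hane, one_smul]
      rw [hTyeq]
      exact Subalgebra.smul_mem _ (Subalgebra.smul_mem _
        (sub_mem (mul_mem hzA hwA) hrrmem) _) _

lemma suppIn_of_groupSubalgebra {S : Subgroup (WreathProduct G n)}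
    {a : MonoidAlgebra ℂ (WreathProduct G n)}
    (ha : a ∈ groupSubalgebra (WreathProduct G n) S) : suppIn S a := by
  refine Algebra.adjoin_induction ?_ ?_ ?_ ?_ ha
  · rintro x ⟨t, rfl⟩ w hw
    have hwt : w = (t : WreathProduct G n) := by
      by_contra hc
      apply hw
      show (MonoidAlgebra.single (t : WreathProduct G n) (1 : ℂ)).coeff w = 0
      exact Finsupp.single_eq_of_ne hc
    rw [hwt]
    exact t.2
  · intro r w hw
    have hw1 : w = 1 := by
      by_contra hc
      apply hw
      show (MonoidAlgebra.single (1 : WreathProduct G n) r).coeff w = 0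
      exact Finsupp.single_eq_of_ne hc
    rw [hw1]
    exact S.one_mem
  · intro x y hx hy ihx ihy w hw
    by_cases hxw : x.coeff w = 0
    · refine ihy w ?_
      intro hc
      apply hw
      show x.coeff w + y.coeff w = 0
      rw [hxw, hc, add_zero]
    · exact ihx w hxw
  · intro x y hx hy ihx ihy w hw
    have hmem : w ∈ (x * y).coeff.support := Finsupp.mem_support_iff.mpr hw
    have := MonoidAlgebra.support_coeff_mul_subset x y hmem
    rw [Finset.mem_mul] at this
    obtain ⟨w₁, h1, w₂, h2, rfl⟩ := this
    exact S.mul_mem (ihx w₁ (Finsupp.mem_support_iff.mp h1)) (ihy w₂ (Finsupp.mem_support_iff.mp h2))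

lemma main_mem_Acomm {m : ℕ} (hm2 : 2 ≤ m) (hmn : m ≤ n)
    {a : MonoidAlgebra ℂ (WreathProduct G n)}
    (haK : a ∈ groupSubalgebra (WreathProduct G n) (Hmn G n m))
    (haC : a ∈ Subalgebra.centralizer ℂ
      ((groupSubalgebra (WreathProduct G n) (Hmn G n (m - 1)) :
        Subalgebra ℂ (MonoidAlgebra ℂ (WreathProduct G n))) : Set _)) :
    a ∈ Acomm m := by
  have hcomm : commWith (Hmn G n (m - 1)) a := by
    intro t ht
    refine (Subalgebra.mem_centralizer_iff ℂ).mp haC (of' t) ?_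
    exact Algebra.subset_adjoin ⟨⟨t, ht⟩, rfl⟩
  have hsupp : suppIn (Hmn G n m) a := suppIn_of_groupSubalgebra haK
  refine mem_Acomm_of_commWith a hcomm ?_
  intro w hw
  exact conjSum_mem_Acomm hm2 hmn (ddeg w) w (hsupp w (Finsupp.mem_support_iff.mp hw)) le_rfl

end RelComm

/-- For `2 ≤ m ≤ n`, the relative commutant `Z(ℂ[H_{m,n}], ℂ[H_{m-1,n}])`
is commutative. -/
theorem relative_commutant_commutative (G : Type) [Group G] [Fintype G]
    (n m : ℕ) (h2 : 2 ≤ m) (hmn : m ≤ n) :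
    ∀ a b : MonoidAlgebra ℂ (WreathProduct G n),
      a ∈ groupSubalgebra (WreathProduct G n) (Hmn G n m) ⊓
        Subalgebra.centralizer ℂ
          ((groupSubalgebra (WreathProduct G n) (Hmn G n (m - 1)) :
            Subalgebra ℂ (MonoidAlgebra ℂ (WreathProduct G n))) : Set _) →
      b ∈ groupSubalgebra (WreathProduct G n) (Hmn G n m) ⊓
        Subalgebra.centralizer ℂ
          ((groupSubalgebra (WreathProduct G n) (Hmn G n (m - 1)) :
            Subalgebra ℂ (MonoidAlgebra ℂ (WreathProduct G n))) : Set _) →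
      a * b = b * a := by
  intro a b ha hb
  have ha' : a ∈ groupSubalgebra (WreathProduct G n) (Hmn G n m) ∧
      a ∈ Subalgebra.centralizer ℂ
        ((groupSubalgebra (WreathProduct G n) (Hmn G n (m - 1)) :
          Subalgebra ℂ (MonoidAlgebra ℂ (WreathProduct G n))) : Set _) := ha
  have hb' : b ∈ groupSubalgebra (WreathProduct G n) (Hmn G n m) ∧
      b ∈ Subalgebra.centralizer ℂ
        ((groupSubalgebra (WreathProduct G n) (Hmn G n (m - 1)) :
          Subalgebra ℂ (MonoidAlgebra ℂ (WreathProduct G n))) : Set _) := hb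
  exact RelComm.Acomm_comm (RelComm.main_mem_Acomm h2 hmn ha'.1 ha'.2)
    (RelComm.main_mem_Acomm h2 hmn hb'.1 hb'.2)
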